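/- Let ψ ∈ Ω, let (X,μ) be a σ-finite measure space, and let f : X → [0,∞) be measurable with (using the convention e^{-1/(u·f(x))} := 0 when f(x) = 0) sup_{λ>0} (1/ψ(λ)) ∫₀^λ (∫_X e^{-1/(u·f(x))} dμ(x)) du/u² < ∞. Let g ∈ L^q(X,μ) for some q ∈ (1,∞). Then lim_{λ→∞} (1/ψ(λ)) ∫₁^λ (∫_X g(x)·e^{-1/(t·f(x))} dμ(x)) dt/t² = 0. -/

import Mathlib

open Filter Set Topology MeasureTheory
open scoped ENNReal NNReal

/-- Let `ψ ∈ Ω`, `(X,μ)` σ-finite, and `f : X → [0,∞)` measurable with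
(convention `e^{-1/(u·f(x))} = 0` when `f(x) = 0`)
`sup_{λ>0} (1/ψ(λ)) ∫₀^λ (∫_X e^{-1/(u f)} dμ) du/u² < ∞`.
Let `g ∈ L^q(X,μ)` for some `q ∈ (1,∞)`. Then
`lim_{λ→∞} (1/ψ(λ)) ∫₁^λ (∫_X g·e^{-1/(t f)} dμ) dt/t² = 0`. -/
theorem stmt18
    (ψ : ℝ → ℝ)
    (hmono : MonotoneOn ψ (Set.Ici 0))
    (hconc : ConcaveOn ℝ (Set.Ici 0) ψ)
    (hzero : ψ 0 = 0)
    (hnonneg : ∀ t ≥ (0:ℝ), 0 ≤ ψ t)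
    (htop : Tendsto ψ atTop atTop)
    {X : Type*} [MeasurableSpace X] (μ : Measure X) [SigmaFinite μ]
    (f : X → ℝ)
    (hfmeas : Measurable f)
    (hfnn : ∀ x, 0 ≤ f x)
    (hfC : ∃ C : ℝ, ∀ lam > (0:ℝ),
      (∫⁻ u in Set.Ioc (0:ℝ) lam,
        (∫⁻ x, ENNReal.ofReal
            (if f x = 0 then 0 else Real.exp (-(1 / (u * f x)))) ∂μ) /
          ENNReal.ofReal (u ^ 2)) ≤ ENNReal.ofReal (C * ψ lam))
    (g : X → ℝ) (q : ℝ) (hq : 1 < q)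
    (hg : MemLp g (ENNReal.ofReal q) μ) :
    Tendsto (fun lam =>
        (∫ t in (1:ℝ)..lam,
          (∫ x, g x * (if f x = 0 then 0 else Real.exp (-(1 / (t * f x)))) ∂μ) / t ^ 2)
          / ψ lam)
      atTop (𝓝 0) := by
  have hq0 : (0:ℝ) < q := lt_trans one_pos hq
  set q' : ℝ := q / (q - 1) with hq'def
  have hq'conj : q.HolderConjugate q' := Real.HolderConjugate.conjExponent hq
  have hq'1 : 1 < q' := hq'conj.symm.lt
  have hq'0 : (0:ℝ) < q' := lt_trans one_pos hq'1
  -- notation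
  set w : ℝ → X → ℝ := fun t x => if f x = 0 then 0 else Real.exp (-(1 / (t * f x))) with hwdef
  set W : ℝ → X → ℝ≥0∞ := fun t x => ENNReal.ofReal (w t x) with hWdef
  set H : ℝ → ℝ≥0∞ := fun t => ∫⁻ x, W t x ∂μ with hHdef
  set F : ℝ → ℝ := fun t => ∫ x, g x * w t x ∂μ with hFdef
  set Sg : ℝ≥0∞ := eLpNorm g (ENNReal.ofReal q) μ with hSgdef
  have hSgfin : Sg ≠ ∞ := hg.2.ne
  -- measurability
  have hwmeas : Measurable (fun p : ℝ × X => w p.1 p.2) := by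
    have hset : MeasurableSet {p : ℝ × X | f p.2 = 0} :=
      (hfmeas.comp measurable_snd) (measurableSet_singleton 0)
    refine Measurable.ite hset measurable_const ?_
    exact ((measurable_const.div
      (measurable_fst.mul (hfmeas.comp measurable_snd))).neg).exp
  have hWmeas : Measurable (fun p : ℝ × X => W p.1 p.2) :=
    ENNReal.measurable_ofReal.comp hwmeas
  have hHmeas : Measurable H := Measurable.lintegral_prod_right' hWmeas
  -- basic bounds on w
  have hw_nonneg : ∀ t x, 0 ≤ w t x := by
    intro t x
    by_cases h : f x = 0 <;> simp [hwdef, h, Real.exp_nonneg]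
  have hw_le_one : ∀ t : ℝ, 0 < t → ∀ x, w t x ≤ 1 := by
    intro t ht x
    by_cases h : f x = 0
    · simp [hwdef, h]
    · have hfx : 0 < f x := lt_of_le_of_ne (hfnn x) (Ne.symm h)
      have hpos : 0 < t * f x := mul_pos ht hfx
      have : -(1 / (t * f x)) ≤ 0 := by
        have : 0 ≤ 1 / (t * f x) := by positivity
        linarith
      simp only [hwdef, h, if_false]
      calc Real.exp (-(1 / (t * f x))) ≤ Real.exp 0 := Real.exp_le_exp.2 this
        _ = 1 := Real.exp_zero
  have hW_le_one : ∀ t : ℝ, 0 < t → ∀ x, W t x ≤ 1 := by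
    intro t ht x
    simpa [hWdef] using ENNReal.ofReal_le_ofReal (hw_le_one t ht x)
  -- choose a nonnegative constant
  obtain ⟨C₀, hC₀⟩ := hfC
  set C : ℝ := |C₀| + 1 with hCdef
  have hCpos : 0 < C := by positivity
  have hC : ∀ lam > (0:ℝ),
      (∫⁻ u in Set.Ioc (0:ℝ) lam, H u / ENNReal.ofReal (u ^ 2)) ≤
        ENNReal.ofReal (C * ψ lam) := by
    intro lam hlam
    refine le_trans (hC₀ lam hlam) (ENNReal.ofReal_le_ofReal ?_)
    have hψ : 0 ≤ ψ lam := hnonneg lam hlam.le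
    have : C₀ ≤ C := by
      have := abs_nonneg C₀
      have := le_abs_self C₀
      simp only [hCdef]; linarith
    nlinarith
  -- Hölder in x
  have key1 : ∀ t : ℝ, 0 < t → ENNReal.ofReal ‖F t‖ ≤ Sg * H t ^ (1 / q') := by
    intro t ht
    have hGmeas : AEMeasurable (fun x => (‖g x‖₊ : ℝ≥0∞)) μ := hg.1.enorm
    have hWt : Measurable (fun x => W t x) := hWmeas.comp measurable_prodMk_left
    calc ENNReal.ofReal ‖F t‖ = (‖F t‖₊ : ℝ≥0∞) := ofReal_norm_eq_enorm _
      _ ≤ ∫⁻ x, ‖g x * w t x‖₊ ∂μ := enorm_integral_le_lintegral_enorm _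
      _ = ∫⁻ x, ((fun x => (‖g x‖₊ : ℝ≥0∞)) * fun x => W t x) x ∂μ := by
          refine lintegral_congr fun x => ?_
          simp only [Pi.mul_apply, nnnorm_mul, ENNReal.coe_mul, hWdef,
            ← Real.enorm_eq_ofReal (hw_nonneg t x)]
          rfl
      _ ≤ (∫⁻ x, (‖g x‖₊ : ℝ≥0∞) ^ q ∂μ) ^ (1/q) * (∫⁻ x, W t x ^ q' ∂μ) ^ (1/q') :=
          ENNReal.lintegral_mul_le_Lp_mul_Lq μ hq'conj hGmeas hWt.aemeasurable
      _ ≤ Sg * H t ^ (1/q') := by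
          have hSg_eq : Sg = (∫⁻ x, (‖g x‖₊ : ℝ≥0∞) ^ q ∂μ) ^ (1/q) := by
            rw [hSgdef, eLpNorm_eq_lintegral_rpow_enorm_toReal
              (by simpa [ENNReal.ofReal_eq_zero] using hq0) ENNReal.ofReal_ne_top,
              ENNReal.toReal_ofReal hq0.le]
            rfl
          rw [hSg_eq]
          gcongr
          refine lintegral_mono fun x => ?_
          have h1 : W t x ^ q' ≤ W t x ^ (1:ℝ) :=
            ENNReal.rpow_le_rpow_of_exponent_ge (hW_le_one t ht x) hq'1.le
          simpa using h1
  -- Main quantitative bound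
  have hsum : 1/q + 1/q' = 1 := by
    simpa [one_div] using hq'conj.inv_add_inv_eq_one
  have key : ∀ lam : ℝ, 1 ≤ lam →
      ‖∫ t in (1:ℝ)..lam, F t / t ^ 2‖ ≤ Sg.toReal * (C * ψ lam) ^ (1 / q') := by
    intro lam hlam
    have hlam0 : (0:ℝ) < lam := lt_of_lt_of_le one_pos hlam
    have hψnn : 0 ≤ ψ lam := hnonneg lam hlam0.le
    set b : ℝ → ℝ≥0∞ := fun t => ENNReal.ofReal (t ^ 2) with hbdef
    have hbmeas : Measurable b :=
      ENNReal.measurable_ofReal.comp (measurable_id.pow_const 2)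
    -- Step A
    have stepA : (‖∫ t in (1:ℝ)..lam, F t / t ^ 2‖₊ : ℝ≥0∞)
        ≤ ∫⁻ t in Ioc (1:ℝ) lam, Sg * H t ^ (1/q') / b t := by
      rw [intervalIntegral.integral_of_le hlam]
      refine le_trans (enorm_integral_le_lintegral_enorm _) ?_
      refine setLIntegral_mono' measurableSet_Ioc fun t htm => ?_
      have ht0 : 0 < t := lt_trans one_pos htm.1
      have ht2 : 0 < t ^ 2 := by positivity
      have heq : ‖F t / t ^ 2‖ₑ = ENNReal.ofReal ‖F t‖ / b t := by
        rw [← ofReal_norm_eq_enorm, norm_div, Real.norm_of_nonneg ht2.le,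
          ENNReal.ofReal_div_of_pos ht2]
      rw [heq]
      exact ENNReal.div_le_div_right (key1 t ht0) _
    -- Step B
    have stepB : (∫⁻ t in Ioc (1:ℝ) lam, Sg * H t ^ (1/q') / b t)
        ≤ Sg * (ENNReal.ofReal (C * ψ lam)) ^ (1/q') := by
      have e1 : (∫⁻ t in Ioc (1:ℝ) lam, Sg * H t ^ (1/q') / b t)
          = Sg * ∫⁻ t in Ioc (1:ℝ) lam, H t ^ (1/q') * (b t)⁻¹ := by
        rw [← lintegral_const_mul' Sg _ hSgfin]
        exact lintegral_congr fun t => by rw [div_eq_mul_inv, mul_assoc]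
      rw [e1]
      refine mul_le_mul_right ?_ Sg
      have e2 : (∫⁻ t in Ioc (1:ℝ) lam, H t ^ (1/q') * (b t)⁻¹)
          = ∫⁻ t in Ioc (1:ℝ) lam, ((H t / b t) ^ (1/q')) * (((b t)⁻¹) ^ (1/q)) := by
        refine setLIntegral_congr_fun measurableSet_Ioc (fun t htm => ?_)
        have ht0 : 0 < t := lt_trans one_pos htm.1
        have hb0 : b t ≠ 0 := by
          simp only [hbdef, ne_eq, ENNReal.ofReal_eq_zero, not_le]; positivity
        have hbtop : b t ≠ ∞ := ENNReal.ofReal_ne_top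
        have hbinv : (b t)⁻¹ ^ (1/q') * (b t)⁻¹ ^ (1/q) = (b t)⁻¹ := by
          rw [← ENNReal.rpow_add _ _ (ENNReal.inv_ne_zero.2 hbtop)
            (ENNReal.inv_ne_top.2 hb0), show 1/q' + 1/q = 1 by linarith,
            ENNReal.rpow_one]
        calc H t ^ (1/q') * (b t)⁻¹
            = H t ^ (1/q') * ((b t)⁻¹ ^ (1/q') * (b t)⁻¹ ^ (1/q)) := by rw [hbinv]
          _ = (H t ^ (1/q') * (b t)⁻¹ ^ (1/q')) * (b t)⁻¹ ^ (1/q) := by ring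
          _ = ((H t * (b t)⁻¹) ^ (1/q')) * (b t)⁻¹ ^ (1/q) := by
              rw [ENNReal.mul_rpow_of_nonneg _ _ (by positivity : (0:ℝ) ≤ 1/q')]
          _ = ((H t / b t) ^ (1/q')) * (b t)⁻¹ ^ (1/q) := by
              rw [← div_eq_mul_inv]
      rw [e2]
      have hrp1 : ∀ x : ℝ≥0∞, (x ^ (1/q')) ^ q' = x := fun x => by
        rw [← ENNReal.rpow_mul, one_div, inv_mul_cancel₀ (ne_of_gt hq'0), ENNReal.rpow_one]
      have hrp2 : ∀ x : ℝ≥0∞, (x ^ (1/q)) ^ q = x := fun x => by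
        rw [← ENNReal.rpow_mul, one_div, inv_mul_cancel₀ (ne_of_gt hq0), ENNReal.rpow_one]
      have hfac1 : (∫⁻ t in Ioc (1:ℝ) lam, H t / b t) ≤ ENNReal.ofReal (C * ψ lam) :=
        le_trans (lintegral_mono_set (Ioc_subset_Ioc_left zero_le_one)) (hC lam hlam0)
      have hfac2 : (∫⁻ t in Ioc (1:ℝ) lam, (b t)⁻¹) ≤ 1 := by
        have hpt : ∀ t ∈ Ioc (1:ℝ) lam, (b t)⁻¹ ≤ ENNReal.ofReal (t ^ (-2:ℝ)) := by
          intro t htm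
          have ht0 : 0 < t := lt_trans one_pos htm.1
          have h1 : (b t)⁻¹ = ENNReal.ofReal ((t^2)⁻¹) :=
            (ENNReal.ofReal_inv_of_pos (by positivity)).symm
          have h2 : t ^ (-2:ℝ) = (t^2)⁻¹ := by
            rw [Real.rpow_neg ht0.le, show (2:ℝ) = ((2:ℕ):ℝ) by norm_num,
              Real.rpow_natCast]
          rw [h1, h2]
        calc (∫⁻ t in Ioc (1:ℝ) lam, (b t)⁻¹)
            ≤ ∫⁻ t in Ioc (1:ℝ) lam, ENNReal.ofReal (t ^ (-2:ℝ)) :=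
              setLIntegral_mono' measurableSet_Ioc hpt
          _ ≤ ∫⁻ t in Ioi (1:ℝ), ENNReal.ofReal (t ^ (-2:ℝ)) :=
              lintegral_mono_set Ioc_subset_Ioi_self
          _ = ENNReal.ofReal (∫ t in Ioi (1:ℝ), t ^ (-2:ℝ)) := by
              refine (ofReal_integral_eq_lintegral_ofReal
                (integrableOn_Ioi_rpow_of_lt (by norm_num) one_pos) ?_).symm
              filter_upwards [ae_restrict_mem measurableSet_Ioi] with t ht
              exact Real.rpow_nonneg (zero_lt_one.trans ht).le _
          _ = 1 := by
              rw [integral_Ioi_rpow_of_lt (by norm_num) one_pos]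
              norm_num
      calc (∫⁻ t in Ioc (1:ℝ) lam, ((H t / b t) ^ (1/q')) * (((b t)⁻¹) ^ (1/q)))
          ≤ (∫⁻ t in Ioc (1:ℝ) lam, ((H t / b t) ^ (1/q')) ^ q') ^ (1/q') *
              (∫⁻ t in Ioc (1:ℝ) lam, (((b t)⁻¹) ^ (1/q)) ^ q) ^ (1/q) :=
            ENNReal.lintegral_mul_le_Lp_mul_Lq _ hq'conj.symm
              (((hHmeas.div hbmeas).pow_const _).aemeasurable)
              ((hbmeas.inv.pow_const _).aemeasurable)
        _ = (∫⁻ t in Ioc (1:ℝ) lam, H t / b t) ^ (1/q') *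
              (∫⁻ t in Ioc (1:ℝ) lam, (b t)⁻¹) ^ (1/q) := by
            congr 1
            · congr 1; exact lintegral_congr fun t => hrp1 _
            · congr 1; exact lintegral_congr fun t => hrp2 _
        _ ≤ (ENNReal.ofReal (C * ψ lam)) ^ (1/q') * 1 ^ (1/q) := by
            gcongr
        _ = (ENNReal.ofReal (C * ψ lam)) ^ (1/q') := by
            rw [ENNReal.one_rpow, mul_one]
    -- combine and pass to reals
    have hfin : Sg * (ENNReal.ofReal (C * ψ lam)) ^ (1/q') ≠ ∞ :=
      ENNReal.mul_ne_top hSgfin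
        (ENNReal.rpow_ne_top_of_nonneg (by positivity) ENNReal.ofReal_ne_top)
    calc ‖∫ t in (1:ℝ)..lam, F t / t ^ 2‖
        = ((‖∫ t in (1:ℝ)..lam, F t / t ^ 2‖₊ : ℝ≥0∞)).toReal := by simp
      _ ≤ (Sg * (ENNReal.ofReal (C * ψ lam)) ^ (1/q')).toReal :=
          ENNReal.toReal_mono hfin (le_trans stepA stepB)
      _ = Sg.toReal * (C * ψ lam) ^ (1/q') := by
          rw [ENNReal.toReal_mul, ← ENNReal.toReal_rpow,
            ENNReal.toReal_ofReal (mul_nonneg hCpos.le hψnn)]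
  -- conclusion
  set K : ℝ := Sg.toReal * C ^ (1/q') with hKdef
  have hbound : Tendsto (fun lam => K * (ψ lam) ^ (-(1/q))) atTop (𝓝 0) := by
    have h1 : Tendsto (fun x : ℝ => x ^ (-(1/q))) atTop (𝓝 0) :=
      tendsto_rpow_neg_atTop (by positivity)
    have h2 := (h1.comp htop).const_mul K
    simpa [Function.comp, mul_zero] using h2
  refine squeeze_zero_norm' ?_ hbound
  filter_upwards [eventually_ge_atTop (1:ℝ), htop.eventually_ge_atTop (1:ℝ)]
    with lam hlam hψ1
  have hψpos : 0 < ψ lam := lt_of_lt_of_le one_pos hψ1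
  have hnorm : ‖(∫ t in (1:ℝ)..lam,
        (∫ x, g x * (if f x = 0 then 0 else Real.exp (-(1 / (t * f x)))) ∂μ) / t ^ 2)
        / ψ lam‖ = ‖∫ t in (1:ℝ)..lam, F t / t ^ 2‖ / ψ lam := by
    rw [norm_div, Real.norm_of_nonneg hψpos.le]
  rw [hnorm]
  have hψq : (ψ lam) ^ (1/q') / ψ lam = (ψ lam) ^ (-(1/q)) := by
    have hexp : 1/q' - 1 = -(1/q) := by linarith
    rw [← hexp, Real.rpow_sub hψpos, Real.rpow_one]
  calc ‖∫ t in (1:ℝ)..lam, F t / t ^ 2‖ / ψ lam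
      ≤ (Sg.toReal * (C * ψ lam) ^ (1/q')) / ψ lam := by
        gcongr
        exact key lam hlam
    _ = K * ((ψ lam) ^ (1/q') / ψ lam) := by
        rw [Real.mul_rpow hCpos.le hψpos.le, hKdef]; ring
    _ = K * (ψ lam) ^ (-(1/q)) := by rw [hψq]
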